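/- If M and N are symmetric positive semidefinite m×m real matrices with N ⪯ M (i.e., M − N positive semidefinite), then logdet(I_m + M) − logdet(I_m + N) ≤ logdet(I_m + M − N). -/

import Mathlib

open Matrix RealInnerProductSpace
open scoped MatrixOrder

variable {n : Type*} [Fintype n] [DecidableEq n]

lemma aux_det_le_one {Z : Matrix n n ℝ} (hZ : Z.PosSemidef)
    (h1 : (1 - Z).PosSemidef) : Z.det ≤ 1 := by
  rw [hZ.1.det_eq_prod_eigenvalues]
  have key : ∀ i, hZ.1.eigenvalues i ≤ 1 := by
    intro i
    set v : n → ℝ := ⇑(hZ.1.eigenvectorBasis i) with hv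
    have hvv : dotProduct (star v) v = 1 := by
      have hn := (hZ.1.eigenvectorBasis.orthonormal).1 i
      have h2 : ⟪hZ.1.eigenvectorBasis i, hZ.1.eigenvectorBasis i⟫ = (1 : ℝ) := by
        rw [real_inner_self_eq_norm_sq, hn]; norm_num
      rw [EuclideanSpace.inner_eq_star_dotProduct] at h2
      exact h2
    have hval := hZ.1.eigenvalues_eq i
    have hpos := h1.re_dotProduct_nonneg v
    simp only [sub_mulVec, one_mulVec, dotProduct_sub, RCLike.re_to_real] at hpos
    rw [hvv] at hpos
    simp only [RCLike.re_to_real] at hval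
    rw [← hv] at hval
    linarith [hval ▸ hpos]
  calc (∏ i, (hZ.1.eigenvalues i : ℝ))
      ≤ 1 := Finset.prod_le_one (fun i _ => by exact_mod_cast hZ.eigenvalues_nonneg i)
        (fun i _ => by exact_mod_cast key i)

lemma aux_det_mono {B C : Matrix n n ℝ} (hB : B.PosDef) (hC : C.PosSemidef)
    (hBC : (B - C).PosSemidef) : C.det ≤ B.det := by
  set S := CFC.sqrt B with hS
  have hSS : S * S = B := CFC.sqrt_mul_sqrt_self B hB.posSemidef.nonneg
  have hSpsd : S.PosSemidef := (CFC.sqrt_nonneg B).posSemidef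
  have hSdet : IsUnit S.det := by
    have hd : S.det * S.det = B.det := by rw [← det_mul, hSS]
    exact isUnit_iff_ne_zero.mpr fun h => by
      rw [h, mul_zero] at hd; exact hB.det_pos.ne hd
  have hSH : Sᴴ = S := hSpsd.isHermitian
  have hSiH : (S⁻¹)ᴴ = S⁻¹ := by rw [conjTranspose_nonsing_inv, hSH]
  have hSi : S⁻¹ * S = 1 := nonsing_inv_mul S hSdet
  have hSi' : S * S⁻¹ = 1 := mul_nonsing_inv S hSdet
  set Z := S⁻¹ * C * S⁻¹ with hZ
  have hZpsd : Z.PosSemidef := by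
    have := hC.conjTranspose_mul_mul_same S⁻¹
    rwa [hSiH] at this
  have hone : S⁻¹ * B * S⁻¹ = 1 := by
    rw [← hSS, ← Matrix.mul_assoc, hSi, Matrix.one_mul, hSi']
  have h1Z : (1 - Z).PosSemidef := by
    have h := hBC.conjTranspose_mul_mul_same S⁻¹
    rw [hSiH] at h
    have e : S⁻¹ * (B - C) * S⁻¹ = 1 - Z := by
      rw [Matrix.mul_sub, Matrix.sub_mul, hone, hZ]
    rwa [e] at h
  have hCe : C = S * Z * S := by
    rw [hZ, ← Matrix.mul_assoc, ← Matrix.mul_assoc, hSi', Matrix.one_mul,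
      Matrix.mul_assoc, hSi, Matrix.mul_one]
  have hdet : C.det = B.det * Z.det := by
    rw [hCe, ← hSS]; simp only [det_mul]; ring
  rw [hdet]
  nlinarith [aux_det_le_one hZpsd h1Z, hB.det_pos]

lemma aux_psd_det_nonneg {Z : Matrix n n ℝ} (hZ : Z.PosSemidef) : 0 ≤ Z.det := by
  rw [hZ.1.det_eq_prod_eigenvalues]
  exact Finset.prod_nonneg fun i _ => by exact_mod_cast hZ.eigenvalues_nonneg i

lemma aux_key {N D : Matrix n n ℝ} (hN : N.PosSemidef) (hD : D.PosSemidef) :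
    ((1 + N) + D).det ≤ (1 + N).det * (1 + D).det := by
  set A := 1 + N with hA
  have hApd : A.PosDef := Matrix.PosDef.one.add_posSemidef hN
  set S := CFC.sqrt A with hSdef
  have hSS : S * S = A := CFC.sqrt_mul_sqrt_self A hApd.posSemidef.nonneg
  have hSpsd : S.PosSemidef := (CFC.sqrt_nonneg A).posSemidef
  have hSdet : IsUnit S.det := by
    have hd : S.det * S.det = A.det := by rw [← det_mul, hSS]
    exact isUnit_iff_ne_zero.mpr fun h => by
      rw [h, mul_zero] at hd; exact hApd.det_pos.ne hd
  have hSH : Sᴴ = S := hSpsd.isHermitian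
  have hSiH : (S⁻¹)ᴴ = S⁻¹ := by rw [conjTranspose_nonsing_inv, hSH]
  have hSi : S⁻¹ * S = 1 := nonsing_inv_mul S hSdet
  have hSi' : S * S⁻¹ = 1 := mul_nonsing_inv S hSdet
  set W := CFC.sqrt D with hWdef
  have hWW : W * W = D := CFC.sqrt_mul_sqrt_self D hD.nonneg
  have hWH : Wᴴ = W := (CFC.sqrt_nonneg D).posSemidef.isHermitian
  have hAinv : S⁻¹ * S⁻¹ = A⁻¹ := by rw [← Matrix.mul_inv_rev, hSS]
  have e1 : A + D = S * (1 + S⁻¹ * D * S⁻¹) * S := by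
    rw [Matrix.mul_add, Matrix.mul_one, Matrix.add_mul, hSS,
      Matrix.mul_assoc S (S⁻¹ * D * S⁻¹) S, Matrix.mul_assoc S⁻¹ D S⁻¹,
      Matrix.mul_assoc S⁻¹ (D * S⁻¹) S, Matrix.mul_assoc D S⁻¹ S, hSi,
      Matrix.mul_one, ← Matrix.mul_assoc, hSi', Matrix.one_mul]
  have e2 : (1 + S⁻¹ * D * S⁻¹).det = (1 + W * A⁻¹ * W).det := by
    have h3 : S⁻¹ * D * S⁻¹ = (S⁻¹ * W) * (W * S⁻¹) := by
      rw [← hWW]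
      simp only [Matrix.mul_assoc]
    have h4 : (W * S⁻¹) * (S⁻¹ * W) = W * A⁻¹ * W := by
      rw [← hAinv]
      simp only [Matrix.mul_assoc]
    rw [h3, det_one_add_mul_comm, h4]
  have hCpsd : (W * A⁻¹ * W).PosSemidef := by
    have := (hApd.inv.posSemidef).conjTranspose_mul_mul_same W
    rwa [hWH] at this
  have h1Ainv : (1 - A⁻¹).PosSemidef := by
    have hh := hN.conjTranspose_mul_mul_same S⁻¹
    rw [hSiH] at hh
    have e : S⁻¹ * N * S⁻¹ = 1 - A⁻¹ := by
      have : N = A - 1 := by rw [hA]; abel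
      rw [this, Matrix.mul_sub, Matrix.sub_mul, Matrix.mul_one,
        ← hSS, ← Matrix.mul_assoc, hSi, Matrix.one_mul, hSi', hAinv, hSS]
    rwa [e] at hh
  have hsub : ((1 + D) - (1 + W * A⁻¹ * W)).PosSemidef := by
    have e : (1 + D) - (1 + W * A⁻¹ * W) = Wᴴ * (1 - A⁻¹) * W := by
      rw [hWH, Matrix.mul_sub, Matrix.sub_mul, Matrix.mul_one, hWW]
      abel
    rw [e]
    exact h1Ainv.conjTranspose_mul_mul_same W
  have hfin : (1 + W * A⁻¹ * W).det ≤ (1 + D).det :=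
    aux_det_mono (Matrix.PosDef.one.add_posSemidef hD)
      (Matrix.PosSemidef.one.add hCpsd) hsub
  have hSdn : 0 ≤ S.det := aux_psd_det_nonneg hSpsd
  have hAdet : S.det * S.det = A.det := by rw [← det_mul, hSS]
  calc (A + D).det = S.det * (1 + S⁻¹ * D * S⁻¹).det * S.det := by
        rw [e1, det_mul, det_mul]
    _ = (S.det * S.det) * (1 + W * A⁻¹ * W).det := by rw [e2]; ring
    _ ≤ (S.det * S.det) * (1 + D).det := by
        exact mul_le_mul_of_nonneg_left hfin (mul_nonneg hSdn hSdn)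
    _ = A.det * (1 + D).det := by rw [hAdet]

theorem logdet_diff_le_logdet_sub {m : ℕ} (M N : Matrix (Fin m) (Fin m) ℝ)
    (hM : M.PosSemidef) (hN : N.PosSemidef) (hMN : (M - N).PosSemidef) :
    Real.log ((1 + M).det) - Real.log ((1 + N).det) ≤ Real.log ((1 + (M - N)).det) := by
  have hkey : (1 + M).det ≤ (1 + N).det * (1 + (M - N)).det := by
    have h := aux_key hN hMN
    rwa [show (1 + N) + (M - N) = 1 + M by abel] at h
  have hp : 0 < (1 + M).det := (Matrix.PosDef.one.add_posSemidef hM).det_pos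
  have hq : 0 < (1 + N).det := (Matrix.PosDef.one.add_posSemidef hN).det_pos
  have hr : 0 < (1 + (M - N)).det := (Matrix.PosDef.one.add_posSemidef hMN).det_pos
  rw [sub_le_iff_le_add, ← Real.log_mul hr.ne' hq.ne']
  exact Real.log_le_log hp (le_of_le_of_eq hkey (mul_comm _ _))
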